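/- Let M be an A-module with AV-module structure π. For every multi-index k ∈ ℕ^n with k ≠ 0 and every p ∈ {1,…,n}, the operator ρ_{k,p} : M → M is A-linear: ρ_{k,p}(f·m) = f·ρ_{k,p}(m) for all f ∈ A, m ∈ M. -/

import Mathlib

open MvPolynomial

attribute [local instance 100] LieRing.ofAssociativeRing

lemma rho_altA (m : ℕ) (hm : m ≠ 0) :
    ∑ j ∈ Finset.Iic m, (-1 : ℤ) ^ (m - j) * ((m.choose j : ℤ)) = 0 := by
  have hIic : Finset.Iic m = Finset.range (m + 1) := by
    ext x; simp [Nat.lt_succ_iff]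
  have h1 : ∀ j ∈ Finset.range (m + 1),
      (-1 : ℤ) ^ (m - j) * ((m.choose j : ℤ))
        = (fun i => (-1 : ℤ) ^ i * (m.choose i : ℤ)) (m + 1 - 1 - j) := by
    intro j hj
    simp only [Nat.add_sub_cancel]
    rw [Nat.choose_symm (Nat.lt_succ_iff.mp (Finset.mem_range.mp hj))]
  have hre := Finset.sum_range_reflect (fun i => (-1 : ℤ) ^ i * (m.choose i : ℤ)) (m + 1)
  rw [hIic, Finset.sum_congr rfl h1, hre]
  simpa [hm] using Int.alternating_sum_range_choose (n := m)

lemma rho_altB {n : ℕ} (K : Fin n →₀ ℕ) (hK : K ≠ 0) :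
    ∑ j ∈ Finset.Iic K,
      (-1 : ℤ) ^ ((K - j).sum fun _ v => v) * (∏ i, ((K i).choose (j i) : ℤ)) = 0 := by
  have hstep : ∀ j ∈ Finset.Iic K,
      (-1 : ℤ) ^ ((K - j).sum fun _ v => v) * (∏ i, ((K i).choose (j i) : ℤ))
        = ∏ i, ((-1 : ℤ) ^ (K i - j i) * ((K i).choose (j i) : ℤ)) := by
    intro j hj
    have hsum : ((K - j).sum fun _ v => v) = ∑ i, (K i - j i) := by
      rw [Finsupp.sum_fintype _ _ (fun _ => rfl)]
      exact Finset.sum_congr rfl fun i _ => by rw [Finsupp.tsub_apply]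
    rw [hsum, ← Finset.prod_pow_eq_pow_sum, Finset.prod_mul_distrib]
  have hbij : ∑ j ∈ Finset.Iic K, ∏ i, ((-1 : ℤ) ^ (K i - j i) * ((K i).choose (j i) : ℤ))
      = ∑ g ∈ Fintype.piFinset (fun i => Finset.Iic (K i)),
          ∏ i, ((-1 : ℤ) ^ (K i - g i) * ((K i).choose (g i) : ℤ)) := by
    refine Finset.sum_nbij' (fun j => (j : Fin n → ℕ))
      (fun g => Finsupp.equivFunOnFinite.symm g) ?_ ?_ ?_ ?_ ?_
    · intro a ha
      simp only [Fintype.mem_piFinset, Finset.mem_Iic]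
      exact fun i => (Finset.mem_Iic.mp ha) i
    · intro g hg
      rw [Finset.mem_Iic]
      intro i
      simpa using (Fintype.mem_piFinset.mp hg i)
    · intro a _; simp
    · intro g _; rfl
    · intro a _; rfl
  have hps := Finset.prod_univ_sum (fun i : Fin n => Finset.Iic (K i))
      (fun i v => (-1 : ℤ) ^ (K i - v) * ((K i).choose v : ℤ))
  rw [Finset.sum_congr rfl hstep, hbij, ← hps]
  obtain ⟨i, hi⟩ : ∃ i, K i ≠ 0 := by
    by_contra h
    push_neg at h
    exact hK (Finsupp.ext fun i => h i)
  exact Finset.prod_eq_zero (Finset.mem_univ i) (rho_altA (K i) hi)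

/-- The operator `ρ_{K,p}` built from an `AV`-module structure `π`:
`ρ_{K,p}(m) = Σ_{0 ≤ j ≤ K} (−1)^{|K−j|} C(K,j) X^{K−j} • π(X^j ∂_p)(m)`. -/
noncomputable def rho {k : Type*} [Field k] [CharZero k] {n : ℕ}
    {M : Type*} [AddCommGroup M] [Module k M]
    [Module (MvPolynomial (Fin n) k) M] [IsScalarTower k (MvPolynomial (Fin n) k) M]
    (π : Derivation k (MvPolynomial (Fin n) k) (MvPolynomial (Fin n) k)
        →ₗ⁅k⁆ Module.End k M)
    (K : Fin n →₀ ℕ) (p : Fin n) (m : M) : M :=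
  ∑ j ∈ Finset.Iic K,
    (((-1 : MvPolynomial (Fin n) k) ^ ((K - j).sum fun _ v => v)) *
        ((∏ i, (K i).choose (j i) : ℕ) : MvPolynomial (Fin n) k) *
        monomial (K - j) (1 : k)) •
      π ((monomial j (1 : k) : MvPolynomial (Fin n) k) • pderiv p) m

/-- For every nonzero multi-index `K` and every `p`, the operator
`ρ_{K,p}` is `A`-linear: `ρ_{K,p}(f • m) = f • ρ_{K,p}(m)`. -/
theorem rho_A_linear
    (k : Type*) [Field k] [CharZero k] (n : ℕ)
    (M : Type*) [AddCommGroup M] [Module k M]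
    [Module (MvPolynomial (Fin n) k) M] [IsScalarTower k (MvPolynomial (Fin n) k) M]
    (π : Derivation k (MvPolynomial (Fin n) k) (MvPolynomial (Fin n) k)
        →ₗ⁅k⁆ Module.End k M)
    (hLeibniz : ∀ (η : Derivation k (MvPolynomial (Fin n) k) (MvPolynomial (Fin n) k))
        (f : MvPolynomial (Fin n) k) (m : M),
        π η (f • m) = f • (π η m) + (η f) • m)
    (K : Fin n →₀ ℕ) (hK : K ≠ 0) (p : Fin n) :
    ∀ (f : MvPolynomial (Fin n) k) (m : M),
      rho π K p (f • m) = f • rho π K p m := by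
  intro f m
  classical
  have hsum0 : ∑ j ∈ Finset.Iic K,
      ((-1 : MvPolynomial (Fin n) k) ^ ((K - j).sum fun _ v => v)) *
        ((∏ i, (K i).choose (j i) : ℕ) : MvPolynomial (Fin n) k) = 0 := by
    have hcast : ∀ j ∈ Finset.Iic K,
        ((-1 : MvPolynomial (Fin n) k) ^ ((K - j).sum fun _ v => v)) *
          ((∏ i, (K i).choose (j i) : ℕ) : MvPolynomial (Fin n) k)
          = (Int.castRingHom (MvPolynomial (Fin n) k))
              ((-1 : ℤ) ^ ((K - j).sum fun _ v => v) * (∏ i, ((K i).choose (j i) : ℤ))) := by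
      intro j _
      rw [map_mul, map_pow, map_prod]
      push_cast
      simp only [map_neg, map_one, map_natCast]
    rw [Finset.sum_congr rfl hcast, ← map_sum, rho_altB K hK, map_zero]
  unfold rho
  have hterm : ∀ j ∈ Finset.Iic K,
      ((((-1 : MvPolynomial (Fin n) k) ^ ((K - j).sum fun _ v => v)) *
          ((∏ i, (K i).choose (j i) : ℕ) : MvPolynomial (Fin n) k) *
          monomial (K - j) (1 : k)) •
        π ((monomial j (1 : k) : MvPolynomial (Fin n) k) • pderiv p) (f • m))
      = f • ((((-1 : MvPolynomial (Fin n) k) ^ ((K - j).sum fun _ v => v)) *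
          ((∏ i, (K i).choose (j i) : ℕ) : MvPolynomial (Fin n) k) *
          monomial (K - j) (1 : k)) •
        π ((monomial j (1 : k) : MvPolynomial (Fin n) k) • pderiv p) m)
        + (((((-1 : MvPolynomial (Fin n) k) ^ ((K - j).sum fun _ v => v)) *
          ((∏ i, (K i).choose (j i) : ℕ) : MvPolynomial (Fin n) k)) *
          (monomial K (1 : k) * pderiv p f)) • m) := by
    intro j hj
    rw [hLeibniz, smul_add]
    congr 1
    · rw [smul_smul, smul_smul, mul_comm]
    · rw [smul_smul]
      congr 1
      rw [Derivation.smul_apply, smul_eq_mul]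
      have hmono : (monomial (K - j) (1 : k) : MvPolynomial (Fin n) k) * monomial j 1
          = monomial K 1 := by
        rw [monomial_mul, one_mul, tsub_add_cancel_of_le (Finset.mem_Iic.mp hj)]
      rw [← hmono]
      ring
  rw [Finset.sum_congr rfl hterm, Finset.sum_add_distrib, ← Finset.smul_sum, ← Finset.sum_smul,
    ← Finset.sum_mul, hsum0, zero_mul, zero_smul, add_zero]
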